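/- Let c1, c2, λ be real numbers. Then the 4×4 complex matrix I⊗I + c1·(I⊗σ1) + c2·(I⊗σ2) + λ·(σ3⊗σ3) is positive semidefinite if and only if λ² + c1² + c2² ≤ 1. -/

import Mathlib

open Matrix Kronecker ComplexOrder

noncomputable def σ1 : Matrix (Fin 2) (Fin 2) ℂ := !![0, 1; 1, 0]
noncomputable def σ2 : Matrix (Fin 2) (Fin 2) ℂ := !![0, -Complex.I; Complex.I, 0]
noncomputable def σ3 : Matrix (Fin 2) (Fin 2) ℂ := !![1, 0; 0, -1]

lemma key (l c1 c2 ar ai br bi : ℝ) (h : l^2+c1^2+c2^2 ≤ 1) :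
    0 ≤ (1+l)*(ar^2+ai^2) + (1-l)*(br^2+bi^2)
      + 2*(ar*(c1*br+c2*bi) + ai*(c1*bi-c2*br)) := by
  have h1 : 0 ≤ 1 + l := by nlinarith [sq_nonneg c1, sq_nonneg c2]
  rcases eq_or_lt_of_le h1 with he | hp
  · have hc1 : c1 = 0 := by nlinarith
    have hc2 : c2 = 0 := by nlinarith
    subst hc1 hc2
    nlinarith [sq_nonneg br, sq_nonneg bi, sq_nonneg ar, sq_nonneg ai]
  · nlinarith [sq_nonneg ((1+l)*ar + c1*br + c2*bi), sq_nonneg ((1+l)*ai + c1*bi - c2*br),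
      mul_nonneg (by nlinarith : (0:ℝ) ≤ 1 - l^2 - c1^2 - c2^2) (by positivity : (0:ℝ) ≤ br^2+bi^2)]


set_option maxHeartbeats 1000000 in
/-- for c1, c2, λ real, the matrix
`I⊗I + c1·(I⊗σ1) + c2·(I⊗σ2) + λ·(σ3⊗σ3)` is PSD iff λ² + c1² + c2² ≤ 1. -/
theorem stmt4 (c1 c2 lam : ℝ) :
    (((1 : Matrix (Fin 2) (Fin 2) ℂ) ⊗ₖ (1 : Matrix (Fin 2) (Fin 2) ℂ))
      + (c1 : ℂ) • ((1 : Matrix (Fin 2) (Fin 2) ℂ) ⊗ₖ σ1)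
      + (c2 : ℂ) • ((1 : Matrix (Fin 2) (Fin 2) ℂ) ⊗ₖ σ2)
      + (lam : ℂ) • (σ3 ⊗ₖ σ3)).PosSemidef
    ↔ lam ^ 2 + c1 ^ 2 + c2 ^ 2 ≤ 1 := by
  constructor
  · intro h
    have hq : ∀ ar ai br bi : ℝ, 0 ≤ (1+lam)*(ar^2+ai^2) + (1-lam)*(br^2+bi^2)
        + 2*(ar*(c1*br+c2*bi) + ai*(c1*bi-c2*br)) := by
      intro ar ai br bi
      have hx := h.dotProduct_mulVec_nonneg (fun p => !![((ar:ℂ) + ai*Complex.I), ((br:ℂ) + bi*Complex.I); 0, 0] p.1 p.2)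
      simp only [dotProduct, mulVec, Fintype.sum_prod_type, Fin.sum_univ_two, Matrix.add_apply,
        Matrix.smul_apply, kroneckerMap_apply, one_apply, σ1, σ2, σ3, of_apply, cons_val', cons_val_zero,
        cons_val_one, head_cons, head_fin_const, empty_val', cons_val_fin_one, Pi.star_apply,
        smul_eq_mul] at hx
      norm_num at hx
      rw [Complex.le_def] at hx
      have := hx.1
      simp [Complex.add_re, Complex.mul_re, Complex.mul_im, Complex.add_im, Complex.sub_re,
          Complex.sub_im, Complex.one_re, Complex.one_im, Complex.I_re, Complex.I_im,
          Complex.ofReal_re, Complex.ofReal_im, Complex.conj_re, Complex.conj_im] at this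
      nlinarith [this]
    have h1 : (0:ℝ) ≤ 1 + lam := by nlinarith [hq 1 0 0 0]
    have h2 : (0:ℝ) ≤ 1 - lam := by nlinarith [hq 0 0 1 0]
    have P1 := hq ((1-lam)*c1) (-((1-lam)*c2)) (-(c1^2+c2^2)) 0
    have P2 := hq (-(c1^2+c2^2)) 0 ((1+lam)*c1) ((1+lam)*c2)
    nlinarith [P1, P2, mul_nonneg h1 h2, sq_nonneg (1 - lam^2 - c1^2 - c2^2)]
  · intro h
    refine posSemidef_iff_dotProduct_mulVec.mpr ⟨?_, ?_⟩
    · ext i j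
      fin_cases i <;> fin_cases j <;>
        simp [conjTranspose_apply, kroneckerMap_apply, one_apply, σ1, σ2, σ3,
          Complex.ext_iff, Prod.ext_iff]
    · intro x
      simp only [dotProduct, mulVec, Fintype.sum_prod_type, Fin.sum_univ_two, Matrix.add_apply,
        Matrix.smul_apply, kroneckerMap_apply, one_apply, σ1, σ2, σ3, of_apply, cons_val', cons_val_zero,
        cons_val_one, head_cons, head_fin_const, empty_val', cons_val_fin_one, Pi.star_apply,
        smul_eq_mul]
      norm_num
      rw [Complex.le_def]
      constructor
      · simp [Complex.add_re, Complex.mul_re, Complex.mul_im, Complex.add_im, Complex.sub_re,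
          Complex.sub_im, Complex.one_re, Complex.one_im, Complex.I_re, Complex.I_im,
          Complex.ofReal_re, Complex.ofReal_im, Complex.conj_re, Complex.conj_im]
        nlinarith [key lam c1 c2 (x (0,0)).re (x (0,0)).im (x (0,1)).re (x (0,1)).im h,
          key (-lam) c1 c2 (x (1,0)).re (x (1,0)).im (x (1,1)).re (x (1,1)).im (by nlinarith)]
      · simp [Complex.add_re, Complex.mul_re, Complex.mul_im, Complex.add_im, Complex.sub_re,
          Complex.sub_im, Complex.one_re, Complex.one_im, Complex.I_re, Complex.I_im,
          Complex.ofReal_re, Complex.ofReal_im, Complex.conj_re, Complex.conj_im]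
        ring
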